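/- arXiv:2207.05587 — 5 statements merged into one kernel-verified Lean document; each statement's English description precedes it below -/
import Mathlib

section
/- For every t ≥ 0, the function u(x,y) = ln( 2e^x / (1 + t² + 2 t e^x cos y + e^{2x}) ) satisfies the Liouville equation -Δu = e^{2u} on ℝ². -/
open Real

/-- For every `t ≥ 0`, `u(x,y) = log (2eˣ/(1+t²+2teˣ cos y+e^{2x}))`
satisfies the Liouville equation `-Δu = e^{2u}` on `ℝ²`. -/
theorem family_solves_liouville (t : ℝ) (ht : 0 ≤ t) :
    ∀ x y : ℝ,
      -(deriv (deriv (fun s : ℝ => Real.log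
            (2 * Real.exp s / (1 + t ^ 2 + 2 * t * Real.exp s * Real.cos y + Real.exp (2 * s))))) x
          + deriv (deriv (fun s : ℝ => Real.log
            (2 * Real.exp x / (1 + t ^ 2 + 2 * t * Real.exp x * Real.cos s + Real.exp (2 * x))))) y)
        = Real.exp (2 * Real.log
            (2 * Real.exp x / (1 + t ^ 2 + 2 * t * Real.exp x * Real.cos y + Real.exp (2 * x)))) := by
  have hD : ∀ s c : ℝ, 0 < 1 + t ^ 2 + 2 * t * Real.exp s * Real.cos c + Real.exp (2 * s) := by
    intro s c
    have hE : Real.exp (2 * s) = Real.exp s ^ 2 := by rw [two_mul, Real.exp_add]; ring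
    nlinarith [mul_nonneg (mul_nonneg ht (Real.exp_pos s).le)
        (by linarith [Real.neg_one_le_cos c] : (0:ℝ) ≤ Real.cos c + 1),
      sq_nonneg (t - Real.exp s), Real.exp_pos s]
  intro x y
  -- x-direction
  have hg : ∀ s : ℝ, HasDerivAt (fun s => 1 + t ^ 2 + 2 * t * Real.exp s * Real.cos y + Real.exp (2 * s))
      (2 * t * Real.exp s * Real.cos y + 2 * Real.exp (2 * s)) s := by
    intro s
    have h2 : HasDerivAt (fun s : ℝ => Real.exp (2 * s)) (2 * Real.exp (2 * s)) s := by
      have := (Real.hasDerivAt_exp (2 * s)).comp s ((hasDerivAt_id s).const_mul 2)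
      simpa [Function.comp_def, mul_comm] using this
    have h1 : HasDerivAt (fun s : ℝ => 2 * t * Real.exp s * Real.cos y)
        (2 * t * Real.exp s * Real.cos y) s := by
      simpa [mul_assoc, mul_comm, mul_left_comm] using
        (((Real.hasDerivAt_exp s).const_mul (2 * t)).mul_const (Real.cos y))
    simpa [Pi.add_def] using (((hasDerivAt_const s (1 + t ^ 2)).add h1).add h2)
  have hu1 : ∀ s : ℝ, HasDerivAt (fun s : ℝ => Real.log
      (2 * Real.exp s / (1 + t ^ 2 + 2 * t * Real.exp s * Real.cos y + Real.exp (2 * s))))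
      (1 - (2 * t * Real.exp s * Real.cos y + 2 * Real.exp (2 * s)) /
        (1 + t ^ 2 + 2 * t * Real.exp s * Real.cos y + Real.exp (2 * s))) s := by
    intro s
    have heq : (fun s : ℝ => Real.log
        (2 * Real.exp s / (1 + t ^ 2 + 2 * t * Real.exp s * Real.cos y + Real.exp (2 * s))))
        = fun s : ℝ => Real.log 2 + s - Real.log
          (1 + t ^ 2 + 2 * t * Real.exp s * Real.cos y + Real.exp (2 * s)) := by
      funext s
      rw [Real.log_div (by positivity) (hD s y).ne', Real.log_mul (by norm_num) (Real.exp_pos s).ne',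
        Real.log_exp]
    rw [heq]
    exact ((hasDerivAt_id s).const_add (Real.log 2)).sub ((hg s).log (hD s y).ne')
  have hd1 : deriv (fun s : ℝ => Real.log
      (2 * Real.exp s / (1 + t ^ 2 + 2 * t * Real.exp s * Real.cos y + Real.exp (2 * s))))
      = fun s : ℝ => 1 - (2 * t * Real.exp s * Real.cos y + 2 * Real.exp (2 * s)) /
        (1 + t ^ 2 + 2 * t * Real.exp s * Real.cos y + Real.exp (2 * s)) :=
    funext fun s => (hu1 s).deriv
  have hN : ∀ s : ℝ, HasDerivAt (fun s : ℝ => 2 * t * Real.exp s * Real.cos y + 2 * Real.exp (2 * s))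
      (2 * t * Real.exp s * Real.cos y + 4 * Real.exp (2 * s)) s := by
    intro s
    have h2 : HasDerivAt (fun s : ℝ => 2 * Real.exp (2 * s)) (4 * Real.exp (2 * s)) s := by
      have := ((Real.hasDerivAt_exp (2 * s)).comp s ((hasDerivAt_id s).const_mul 2)).const_mul 2
      rw [show (4:ℝ) * Real.exp (2 * s) = 2 * (Real.exp (2 * s) * (2 * 1)) by ring]; exact this
    have h1 : HasDerivAt (fun s : ℝ => 2 * t * Real.exp s * Real.cos y)
        (2 * t * Real.exp s * Real.cos y) s := by
      simpa [mul_assoc, mul_comm, mul_left_comm] using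
        (((Real.hasDerivAt_exp s).const_mul (2 * t)).mul_const (Real.cos y))
    exact h1.add h2
  have hu2 : HasDerivAt (fun s : ℝ => 1 - (2 * t * Real.exp s * Real.cos y + 2 * Real.exp (2 * s)) /
        (1 + t ^ 2 + 2 * t * Real.exp s * Real.cos y + Real.exp (2 * s)))
      (-(((2 * t * Real.exp x * Real.cos y + 4 * Real.exp (2 * x)) *
          (1 + t ^ 2 + 2 * t * Real.exp x * Real.cos y + Real.exp (2 * x)) -
          (2 * t * Real.exp x * Real.cos y + 2 * Real.exp (2 * x)) *
          (2 * t * Real.exp x * Real.cos y + 2 * Real.exp (2 * x))) /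
          (1 + t ^ 2 + 2 * t * Real.exp x * Real.cos y + Real.exp (2 * x)) ^ 2)) x := by
    simpa [Pi.sub_def] using (hasDerivAt_const x (1:ℝ)).sub ((hN x).div (hg x) (hD x y).ne')
  -- y-direction
  have hh : ∀ s : ℝ, HasDerivAt (fun s => 1 + t ^ 2 + 2 * t * Real.exp x * Real.cos s + Real.exp (2 * x))
      (-(2 * t * Real.exp x * Real.sin s)) s := by
    intro s
    have h1 : HasDerivAt (fun s : ℝ => 2 * t * Real.exp x * Real.cos s)
        (-(2 * t * Real.exp x * Real.sin s)) s := by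
      simpa [mul_comm, mul_assoc, mul_left_comm] using (Real.hasDerivAt_cos s).const_mul (2 * t * Real.exp x)
    simpa [Pi.add_def] using (((hasDerivAt_const s (1 + t ^ 2)).add h1).add (hasDerivAt_const s (Real.exp (2 * x))))
  have hv1 : ∀ s : ℝ, HasDerivAt (fun s : ℝ => Real.log
      (2 * Real.exp x / (1 + t ^ 2 + 2 * t * Real.exp x * Real.cos s + Real.exp (2 * x))))
      (-(-(2 * t * Real.exp x * Real.sin s) /
        (1 + t ^ 2 + 2 * t * Real.exp x * Real.cos s + Real.exp (2 * x)))) s := by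
    intro s
    have heq : (fun s : ℝ => Real.log
        (2 * Real.exp x / (1 + t ^ 2 + 2 * t * Real.exp x * Real.cos s + Real.exp (2 * x))))
        = fun s : ℝ => Real.log (2 * Real.exp x) - Real.log
          (1 + t ^ 2 + 2 * t * Real.exp x * Real.cos s + Real.exp (2 * x)) := by
      funext s
      rw [Real.log_div (by positivity) (hD x s).ne']
    rw [heq]
    simpa [Pi.sub_def] using (hasDerivAt_const s (Real.log (2 * Real.exp x))).sub ((hh s).log (hD x s).ne')
  have hd2 : deriv (fun s : ℝ => Real.log
      (2 * Real.exp x / (1 + t ^ 2 + 2 * t * Real.exp x * Real.cos s + Real.exp (2 * x))))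
      = fun s : ℝ => -(-(2 * t * Real.exp x * Real.sin s) /
        (1 + t ^ 2 + 2 * t * Real.exp x * Real.cos s + Real.exp (2 * x))) :=
    funext fun s => (hv1 s).deriv
  have hM : ∀ s : ℝ, HasDerivAt (fun s : ℝ => -(2 * t * Real.exp x * Real.sin s))
      (-(2 * t * Real.exp x * Real.cos s)) s := by
    intro s
    simpa [mul_comm, mul_assoc, mul_left_comm, Pi.neg_def] using ((Real.hasDerivAt_sin s).const_mul (2 * t * Real.exp x)).neg
  have hv2 : HasDerivAt (fun s : ℝ => -(-(2 * t * Real.exp x * Real.sin s) /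
        (1 + t ^ 2 + 2 * t * Real.exp x * Real.cos s + Real.exp (2 * x))))
      (-((-(2 * t * Real.exp x * Real.cos y) *
          (1 + t ^ 2 + 2 * t * Real.exp x * Real.cos y + Real.exp (2 * x)) -
          -(2 * t * Real.exp x * Real.sin y) * -(2 * t * Real.exp x * Real.sin y)) /
          (1 + t ^ 2 + 2 * t * Real.exp x * Real.cos y + Real.exp (2 * x)) ^ 2)) y :=
    ((hM y).div (hh y) (hD x y).ne').neg
  rw [hd1, hd2, hu2.deriv, hv2.deriv]
  have hpos := hD x y
  have hE : Real.exp (2 * x) = Real.exp x ^ 2 := by rw [two_mul, Real.exp_add]; ring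
  have hrhs : Real.exp (2 * Real.log
      (2 * Real.exp x / (1 + t ^ 2 + 2 * t * Real.exp x * Real.cos y + Real.exp (2 * x))))
      = (2 * Real.exp x / (1 + t ^ 2 + 2 * t * Real.exp x * Real.cos y + Real.exp (2 * x))) ^ 2 := by
    rw [two_mul, Real.exp_add, Real.exp_log (by positivity), sq]
    ring
  rw [hrhs]
  have hs : Real.sin y ^ 2 = 1 - Real.cos y ^ 2 := by
    nlinarith [Real.sin_sq_add_cos_sq y]
  field_simp
  rw [hE]
  linear_combination (-4 * t ^ 2 * Real.exp x ^ 2) * Real.sin_sq_add_cos_sq y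
end

section
/- Every solution u: ℝ → ℝ of -u'' = e^{2u} on ℝ has the form u(x) = ln λ + ln(sech(λ(± x + C))) for some λ > 0 and C ∈ ℝ; equivalently, u(x) = ln λ + ln sech(λ x + b) for some λ > 0, b ∈ ℝ. -/
/-- Every C² solution of `-u'' = e^{2u}` on `ℝ` has the form
`u(x) = log λ + log (sech (λ x + b))` for some `λ > 0`, `b ∈ ℝ`. -/
theorem one_dim_classification (u : ℝ → ℝ) (hu : ContDiff ℝ 2 u)
    (heq : ∀ x : ℝ, -(deriv (deriv u) x) = Real.exp (2 * u x)) :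
    ∃ lam b : ℝ, 0 < lam ∧
      ∀ x : ℝ, u x = Real.log lam + Real.log (1 / Real.cosh (lam * x + b)) := by
  have hud : Differentiable ℝ u := hu.differentiable two_ne_zero
  have hud2 : Differentiable ℝ (deriv u) := by
    have h2 : ContDiff ℝ (1 + 1) u := by norm_num; exact hu
    exact (contDiff_succ_iff_deriv.mp h2).2.2.differentiable one_ne_zero
  -- energy is conserved
  have hE : ∀ x : ℝ, HasDerivAt (fun x => (deriv u x) ^ 2 + Real.exp (2 * u x)) 0 x := by
    intro x
    have h1x : HasDerivAt u (deriv u x) x := (hud x).hasDerivAt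
    have h2x : HasDerivAt (deriv u) (deriv (deriv u) x) x := (hud2 x).hasDerivAt
    have hA : HasDerivAt (fun x => (deriv u x) ^ 2)
        (2 * deriv u x * deriv (deriv u) x) x := by
      have := h2x.fun_pow 2
      simpa [mul_comm, mul_assoc, mul_left_comm] using this
    have hB : HasDerivAt (fun x => Real.exp (2 * u x))
        (Real.exp (2 * u x) * (2 * deriv u x)) x := (h1x.const_mul 2).exp
    have hdd : deriv (deriv u) x = -Real.exp (2 * u x) := by linarith [heq x]
    have := hA.fun_add hB
    refine this.congr_deriv ?_
    rw [hdd]; ring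
  have hconst : ∀ x y : ℝ,
      (deriv u x) ^ 2 + Real.exp (2 * u x) = (deriv u y) ^ 2 + Real.exp (2 * u y) :=
    is_const_of_deriv_eq_zero (fun x => (hE x).differentiableAt) (fun x => (hE x).deriv)
  set c : ℝ := (deriv u 0) ^ 2 + Real.exp (2 * u 0) with hc_def
  have hc : 0 < c := by positivity
  set lam : ℝ := Real.sqrt c with hlam_def
  have hlam : 0 < lam := Real.sqrt_pos.mpr hc
  have hlam2 : lam ^ 2 = c := Real.sq_sqrt hc.le
  have key : ∀ x : ℝ, (deriv u x) ^ 2 + Real.exp (2 * u x) = lam ^ 2 := by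
    intro x; rw [hlam2]; exact hconst x 0
  have hp : ∀ x : ℝ, 0 < lam - deriv u x := by
    intro x; nlinarith [Real.exp_pos (2 * u x), key x]
  have hm : ∀ x : ℝ, 0 < lam + deriv u x := by
    intro x; nlinarith [Real.exp_pos (2 * u x), key x]
  -- the function F has zero derivative
  have hF : ∀ x : ℝ, HasDerivAt
      (fun x => Real.log (lam - deriv u x) - Real.log (lam + deriv u x) - 2 * lam * x) 0 x := by
    intro x
    have h2x : HasDerivAt (deriv u) (deriv (deriv u) x) x := (hud2 x).hasDerivAt
    have hA : HasDerivAt (fun x => Real.log (lam - deriv u x))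
        (-(deriv (deriv u) x) / (lam - deriv u x)) x :=
      (h2x.const_sub lam).log (hp x).ne'
    have hB : HasDerivAt (fun x => Real.log (lam + deriv u x))
        (deriv (deriv u) x / (lam + deriv u x)) x :=
      (h2x.const_add lam).log (hm x).ne'
    have hC : HasDerivAt (fun x : ℝ => 2 * lam * x) (2 * lam) x := by
      simpa using (hasDerivAt_id x).const_mul (2 * lam)
    have hdd : deriv (deriv u) x = -((lam - deriv u x) * (lam + deriv u x)) := by
      have h1 := heq x
      have h2 := key x
      nlinarith [h1, h2]
    have := (hA.fun_sub hB).fun_sub hC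
    refine this.congr_deriv ?_
    rw [hdd]
    field_simp [(hp x).ne', (hm x).ne']
    ring
  have hFconst : ∀ x y : ℝ,
      (Real.log (lam - deriv u x) - Real.log (lam + deriv u x) - 2 * lam * x) =
      (Real.log (lam - deriv u y) - Real.log (lam + deriv u y) - 2 * lam * y) :=
    is_const_of_deriv_eq_zero (fun x => (hF x).differentiableAt) (fun x => (hF x).deriv)
  set b : ℝ := (Real.log (lam - deriv u 0) - Real.log (lam + deriv u 0)) / 2 with hb_def
  refine ⟨lam, b, hlam, fun x => ?_⟩
  set s : ℝ := lam * x + b with hs_def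
  set t : ℝ := Real.exp s with ht_def
  have ht : 0 < t := Real.exp_pos s
  -- solve for deriv u x
  have hlog : Real.log (lam - deriv u x) - Real.log (lam + deriv u x) = 2 * s := by
    have := hFconst x 0
    rw [hs_def, hb_def]; linarith
  have hrel : lam - deriv u x = (lam + deriv u x) * t ^ 2 := by
    have h1 : lam - deriv u x = Real.exp (Real.log (lam + deriv u x) + 2 * s) := by
      rw [← hlog]
      rw [show Real.log (lam - deriv u x) - Real.log (lam + deriv u x) =
        Real.log (lam + deriv u x) + (Real.log (lam - deriv u x)
          - Real.log (lam + deriv u x)) - Real.log (lam + deriv u x) by ring]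
      simp [Real.exp_log (hp x)]
    rw [h1, Real.exp_add, Real.exp_log (hm x)]
    congr 1
    rw [ht_def, ← Real.exp_nat_mul]
    norm_num [mul_comm]
  have hu' : deriv u x * (1 + t ^ 2) = lam * (1 - t ^ 2) := by linear_combination -hrel
  have hE2 : Real.exp (2 * u x) = lam ^ 2 - (deriv u x) ^ 2 := by linarith [key x]
  have hsq : Real.exp (2 * u x) * (1 + t ^ 2) ^ 2 = (2 * lam * t) ^ 2 := by
    linear_combination (1 + t ^ 2) ^ 2 * hE2
      - (deriv u x * (1 + t ^ 2) + lam * (1 - t ^ 2)) * hu'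
  have h1t : (0:ℝ) < 1 + t ^ 2 := by positivity
  have hexp : Real.exp (u x) = 2 * lam * t / (1 + t ^ 2) := by
    have ha : (0:ℝ) < Real.exp (u x) := Real.exp_pos _
    have hb2 : (0:ℝ) < 2 * lam * t / (1 + t ^ 2) := by positivity
    have hsq2 : (Real.exp (u x)) ^ 2 = (2 * lam * t / (1 + t ^ 2)) ^ 2 := by
      rw [← Real.exp_nat_mul]
      push_cast
      rw [show (2:ℝ) * u x = 2 * u x by ring]
      rw [div_pow]
      rw [eq_div_iff (by positivity)]
      rw [show Real.exp (2 * u x) = Real.exp (2 * u x) from rfl]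
      linarith [hsq]
    nlinarith [hsq2, ha, hb2]
  have hcosh : Real.cosh s = (t ^ 2 + 1) / (2 * t) := by
    rw [Real.cosh_eq, Real.exp_neg, ← ht_def]
    field_simp
  have harg : 2 * lam * t / (1 + t ^ 2) = lam * (1 / Real.cosh s) := by
    rw [hcosh]
    rw [one_div_div]
    field_simp
    ring
  have hux : u x = Real.log (2 * lam * t / (1 + t ^ 2)) := by
    rw [← hexp, Real.log_exp]
  rw [hux, harg, Real.log_mul hlam.ne' (one_div_ne_zero (Real.cosh_pos s).ne')]
end

section
/- If f: ℂ → ℂ is holomorphic with f' nowhere vanishing, then u(z) = log( 2|f'(z)| / (1 + |f(z)|²) ) satisfies -Δu = e^{2u} on ℂ ≅ ℝ². -/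
open Complex

noncomputable section LiouvilleAux

private lemma myHasDerivAt_x (g : ℂ → ℂ) (hg : Differentiable ℂ g) (y x : ℝ) :
    HasDerivAt (fun s : ℝ => g (↑s + ↑y * I)) (deriv g (↑x + ↑y * I)) x := by
  have hi : HasDerivAt (fun t : ℂ => t + (↑y * I)) 1 (x : ℂ) :=
    (hasDerivAt_id _).add_const _
  have h1 : HasDerivAt (fun t : ℂ => g (t + ↑y * I)) (deriv g (↑x + ↑y * I)) (x : ℂ) := by
    simpa [Function.comp_def] using ((hg (↑x + ↑y * I)).hasDerivAt.comp (x : ℂ) hi)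
  exact h1.comp_ofReal

private lemma myHasDerivAt_y (g : ℂ → ℂ) (hg : Differentiable ℂ g) (x y : ℝ) :
    HasDerivAt (fun s : ℝ => g (↑x + ↑s * I)) (I * deriv g (↑x + ↑y * I)) y := by
  have hi : HasDerivAt (fun t : ℂ => ↑x + t * I) I (y : ℂ) := by
    simpa using ((hasDerivAt_id (y : ℂ)).mul_const I).const_add (x : ℂ)
  have h1 : HasDerivAt (fun t : ℂ => g (↑x + t * I)) (I * deriv g (↑x + ↑y * I)) (y : ℂ) := by
    have := (hg (↑x + ↑y * I)).hasDerivAt.comp (y : ℂ) hi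
    simpa [mul_comm, Function.comp_def] using this
  exact h1.comp_ofReal

private lemma myHasDerivAt.cre {F : ℝ → ℂ} {d : ℂ} {x : ℝ} (h : HasDerivAt F d x) :
    HasDerivAt (fun s => (F s).re) d.re x := by
  simpa [Function.comp_def] using (Complex.reCLM.hasFDerivAt.comp_hasDerivAt x h)

private lemma myHasDerivAt.cim {F : ℝ → ℂ} {d : ℂ} {x : ℝ} (h : HasDerivAt F d x) :
    HasDerivAt (fun s => (F s).im) d.im x := by
  simpa [Function.comp_def] using (Complex.imCLM.hasFDerivAt.comp_hasDerivAt x h)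

private lemma myHasDerivAt_normSq {F : ℝ → ℂ} {d : ℂ} {x : ℝ} (h : HasDerivAt F d x) :
    HasDerivAt (fun s => Complex.normSq (F s))
      (2 * ((F x).re * d.re + (F x).im * d.im)) x := by
  have h2 : HasDerivAt (fun s => (F s).re * (F s).re + (F s).im * (F s).im)
      (d.re * (F x).re + (F x).re * d.re + (d.im * (F x).im + (F x).im * d.im)) x :=
    ((myHasDerivAt.cre h).mul (myHasDerivAt.cre h)).add
      ((myHasDerivAt.cim h).mul (myHasDerivAt.cim h))
  simp only [Complex.normSq_apply]
  convert h2 using 1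
  ring

private lemma myULog (f : ℂ → ℂ) (hf' : ∀ z : ℂ, deriv f z ≠ 0) (u : ℝ → ℝ → ℝ)
    (hu : ∀ x y : ℝ, u x y =
      Real.log (2 * ‖deriv f (x + y * I)‖ /
        (1 + ‖f (x + y * I)‖ ^ 2))) (x y : ℝ) :
    u x y = Real.log 2 + Real.log (Complex.normSq (deriv f (↑x + ↑y * I))) / 2
      - Real.log (1 + Complex.normSq (f (↑x + ↑y * I))) := by
  have hb : ‖deriv f (↑x + ↑y * I)‖ ≠ 0 :=
    norm_ne_zero_iff.mpr (hf' _)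
  have hs : (1 : ℝ) + ‖f (↑x + ↑y * I)‖ ^ 2 ≠ 0 := by positivity
  rw [hu, Real.log_div (mul_ne_zero two_ne_zero hb) hs,
    Real.log_mul two_ne_zero hb, ← Complex.sq_norm, ← Complex.sq_norm (f _),
    Real.log_pow]
  push_cast
  ring

private lemma normSq_b_ne (f : ℂ → ℂ) (hf' : ∀ z : ℂ, deriv f z ≠ 0) (x y : ℝ) :
    Complex.normSq (deriv f (↑x + ↑y * I)) ≠ 0 :=
  ne_of_gt (Complex.normSq_pos.mpr (hf' _))

private lemma s_ne (f : ℂ → ℂ) (x y : ℝ) :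
    (1 : ℝ) + Complex.normSq (f (↑x + ↑y * I)) ≠ 0 := by
  have := Complex.normSq_nonneg (f (↑x + ↑y * I)); linarith

private lemma derivX (f : ℂ → ℂ) (hf : Differentiable ℂ f)
    (hf' : ∀ z : ℂ, deriv f z ≠ 0) (hf1 : Differentiable ℂ (deriv f))
    (u : ℝ → ℝ → ℝ)
    (hu : ∀ x y : ℝ, u x y =
      Real.log (2 * ‖deriv f (x + y * I)‖ /
        (1 + ‖f (x + y * I)‖ ^ 2))) (y : ℝ) :
    deriv (fun s : ℝ => u s y) = fun x : ℝ =>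
      ((deriv f (↑x + ↑y * I)).re * (deriv (deriv f) (↑x + ↑y * I)).re
        + (deriv f (↑x + ↑y * I)).im * (deriv (deriv f) (↑x + ↑y * I)).im)
          / Complex.normSq (deriv f (↑x + ↑y * I))
      - 2 * ((f (↑x + ↑y * I)).re * (deriv f (↑x + ↑y * I)).re
          + (f (↑x + ↑y * I)).im * (deriv f (↑x + ↑y * I)).im)
          / (1 + Complex.normSq (f (↑x + ↑y * I))) := by
  funext x
  have hB : HasDerivAt (fun s : ℝ => Complex.normSq (deriv f (↑s + ↑y * I)))
      (2 * ((deriv f (↑x + ↑y * I)).re * (deriv (deriv f) (↑x + ↑y * I)).re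
        + (deriv f (↑x + ↑y * I)).im * (deriv (deriv f) (↑x + ↑y * I)).im)) x :=
    myHasDerivAt_normSq (myHasDerivAt_x (deriv f) hf1 y x)
  have hA : HasDerivAt (fun s : ℝ => Complex.normSq (f (↑s + ↑y * I)))
      (2 * ((f (↑x + ↑y * I)).re * (deriv f (↑x + ↑y * I)).re
        + (f (↑x + ↑y * I)).im * (deriv f (↑x + ↑y * I)).im)) x :=
    myHasDerivAt_normSq (myHasDerivAt_x f hf y x)
  have hLB := (Real.hasDerivAt_log (normSq_b_ne f hf' x y)).comp x hB
  have hS : HasDerivAt (fun s : ℝ => 1 + Complex.normSq (f (↑s + ↑y * I)))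
      (2 * ((f (↑x + ↑y * I)).re * (deriv f (↑x + ↑y * I)).re
        + (f (↑x + ↑y * I)).im * (deriv f (↑x + ↑y * I)).im)) x := hA.const_add 1
  have hLS := (Real.hasDerivAt_log (s_ne f x y)).comp x hS
  have htot := ((hLB.div_const 2).const_add (Real.log 2)).sub hLS
  have hfun : (fun s : ℝ => u s y)
      = fun s : ℝ => Real.log 2
          + Real.log (Complex.normSq (deriv f (↑s + ↑y * I))) / 2
          - Real.log (1 + Complex.normSq (f (↑s + ↑y * I))) := by
    funext s; exact myULog f hf' u hu s y
  rw [hfun]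
  refine HasDerivAt.deriv ?_
  convert htot using 1
  · rfl
  field_simp [Function.comp]

private lemma derivY (f : ℂ → ℂ) (hf : Differentiable ℂ f)
    (hf' : ∀ z : ℂ, deriv f z ≠ 0) (hf1 : Differentiable ℂ (deriv f))
    (u : ℝ → ℝ → ℝ)
    (hu : ∀ x y : ℝ, u x y =
      Real.log (2 * ‖deriv f (x + y * I)‖ /
        (1 + ‖f (x + y * I)‖ ^ 2))) (x : ℝ) :
    deriv (fun s : ℝ => u x s) = fun y : ℝ =>
      ((deriv f (↑x + ↑y * I)).im * (deriv (deriv f) (↑x + ↑y * I)).re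
        - (deriv f (↑x + ↑y * I)).re * (deriv (deriv f) (↑x + ↑y * I)).im)
          / Complex.normSq (deriv f (↑x + ↑y * I))
      - 2 * ((f (↑x + ↑y * I)).im * (deriv f (↑x + ↑y * I)).re
          - (f (↑x + ↑y * I)).re * (deriv f (↑x + ↑y * I)).im)
          / (1 + Complex.normSq (f (↑x + ↑y * I))) := by
  funext y
  have hB := myHasDerivAt_normSq (myHasDerivAt_y (deriv f) hf1 x y)
  have hA := myHasDerivAt_normSq (myHasDerivAt_y f hf x y)
  have hLB := (Real.hasDerivAt_log (normSq_b_ne f hf' x y)).comp y hB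
  have hLS := (Real.hasDerivAt_log (s_ne f x y)).comp y (hA.const_add 1)
  have htot := ((hLB.div_const 2).const_add (Real.log 2)).sub hLS
  have hfun : (fun s : ℝ => u x s)
      = fun s : ℝ => Real.log 2
          + Real.log (Complex.normSq (deriv f (↑x + ↑s * I))) / 2
          - Real.log (1 + Complex.normSq (f (↑x + ↑s * I))) := by
    funext s; exact myULog f hf' u hu x s
  rw [hfun]
  refine HasDerivAt.deriv ?_
  convert htot using 1
  · rfl
  simp only [Complex.mul_re, Complex.mul_im, Complex.I_re, Complex.I_im]
  field_simp [Function.comp]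
  ring

end LiouvilleAux

open Complex in
/-- Liouville's formula: for an entire locally univalent `f`, the logarithm of
its spherical derivative satisfies `-Δu = e^{2u}`. -/
theorem log_spherical_derivative_solves_liouville
    (f : ℂ → ℂ) (hf : Differentiable ℂ f) (hf' : ∀ z : ℂ, deriv f z ≠ 0)
    (u : ℝ → ℝ → ℝ)
    (hu : ∀ x y : ℝ, u x y =
      Real.log (2 * ‖deriv f (x + y * I)‖ /
        (1 + ‖f (x + y * I)‖ ^ 2))) :
    ∀ x y : ℝ,
      -(deriv (deriv (fun s : ℝ => u s y)) x
          + deriv (deriv (fun s : ℝ => u x s)) y)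
        = Real.exp (2 * u x y) := by
  have hcd : ContDiff ℂ ((⊤ : ℕ∞) : WithTop ℕ∞) f := hf.contDiff
  have hcd1 : ContDiff ℂ ((⊤ : ℕ∞) : WithTop ℕ∞) (deriv f) := (contDiff_infty_iff_deriv.mp hcd).2
  have hcd2 : ContDiff ℂ ((⊤ : ℕ∞) : WithTop ℕ∞) (deriv (deriv f)) := (contDiff_infty_iff_deriv.mp hcd1).2
  have hf1 : Differentiable ℂ (deriv f) := hcd1.differentiable (by simp)
  have hf2 : Differentiable ℂ (deriv (deriv f)) := hcd2.differentiable (by simp)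
  intro x y
  -- x-direction second derivative
  have hbx := myHasDerivAt_x (deriv f) hf1 y x
  have hcx := myHasDerivAt_x (deriv (deriv f)) hf2 y x
  have hax := myHasDerivAt_x f hf y x
  have hnum1x := (myHasDerivAt.cre hbx |>.mul (myHasDerivAt.cre hcx)).add
      (myHasDerivAt.cim hbx |>.mul (myHasDerivAt.cim hcx))
  have hden1x := myHasDerivAt_normSq hbx
  have hdiv1x := hnum1x.div hden1x (normSq_b_ne f hf' x y)
  have hnum2x := (((myHasDerivAt.cre hax |>.mul (myHasDerivAt.cre hbx)).add
      (myHasDerivAt.cim hax |>.mul (myHasDerivAt.cim hbx))).const_mul (2 : ℝ))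
  have hden2x := (myHasDerivAt_normSq hax).const_add (1 : ℝ)
  have hdiv2x := hnum2x.div hden2x (s_ne f x y)
  have htotx := hdiv1x.sub hdiv2x
  -- y-direction second derivative
  have hby := myHasDerivAt_y (deriv f) hf1 x y
  have hcy := myHasDerivAt_y (deriv (deriv f)) hf2 x y
  have hay := myHasDerivAt_y f hf x y
  have hnum1y := (myHasDerivAt.cim hby |>.mul (myHasDerivAt.cre hcy)).sub
      (myHasDerivAt.cre hby |>.mul (myHasDerivAt.cim hcy))
  have hden1y := myHasDerivAt_normSq hby
  have hdiv1y := hnum1y.div hden1y (normSq_b_ne f hf' x y)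
  have hnum2y := (((myHasDerivAt.cim hay |>.mul (myHasDerivAt.cre hby)).sub
      (myHasDerivAt.cre hay |>.mul (myHasDerivAt.cim hby))).const_mul (2 : ℝ))
  have hden2y := (myHasDerivAt_normSq hay).const_add (1 : ℝ)
  have hdiv2y := hnum2y.div hden2y (s_ne f x y)
  have htoty := hdiv1y.sub hdiv2y
  rw [derivX f hf hf' hf1 u hu y, derivY f hf hf' hf1 u hu x]
  erw [htotx.deriv, htoty.deriv]
  -- exponential side
  have habs : ‖deriv f (↑x + ↑y * I)‖ ≠ 0 := norm_ne_zero_iff.mpr (hf' _)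
  have hexp : Real.exp (2 * u x y)
      = 4 * Complex.normSq (deriv f (↑x + ↑y * I))
          / (1 + Complex.normSq (f (↑x + ↑y * I))) ^ 2 := by
    rw [hu x y]
    have ht : (0:ℝ) < 2 * ‖deriv f (↑x + ↑y * I)‖ /
        (1 + ‖f (↑x + ↑y * I)‖ ^ 2) := by
      apply div_pos
      · have := norm_nonneg (deriv f (↑x + ↑y * I))
        rcases lt_or_eq_of_le this with h | h
        · linarith
        · exact absurd h.symm habs
      · positivity
    rw [show (2:ℝ) * Real.log (2 * ‖deriv f (↑x + ↑y * I)‖ /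
        (1 + ‖f (↑x + ↑y * I)‖ ^ 2))
      = Real.log ((2 * ‖deriv f (↑x + ↑y * I)‖ /
        (1 + ‖f (↑x + ↑y * I)‖ ^ 2)) ^ (2:ℕ)) by
        rw [Real.log_pow]; push_cast; ring,
      Real.exp_log (by positivity)]
    rw [div_pow, mul_pow, Complex.sq_norm, ← Complex.sq_norm (f _)]
    norm_num
  rw [hexp]
  have hBne := normSq_b_ne f hf' x y
  have hSne := s_ne f x y
  simp only [Complex.mul_re, Complex.mul_im, Complex.I_re, Complex.I_im,
    Complex.normSq_apply, Pi.mul_apply, Pi.add_apply, Pi.sub_apply, Pi.div_apply] at *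
  field_simp
  ring
end

section
/- For the solution u(x,y) = ln(2e^x/(1 + t² + 2te^x cos y + e^{2x})) with t ≥ 0, one has sup_{y∈ℝ} ∫_{-∞}^{∞} e^{u(x,y)} dx = π + 2 arctan t. -/
open MeasureTheory Real Filter Set Topology

lemma f'_eq (a b : ℝ) (hb : 0 < b) (x : ℝ) :
    HasDerivAt (fun x => (2 / b) * Real.arctan ((Real.exp x + a) / b))
      (2 * Real.exp x / ((Real.exp x + a) ^ 2 + b ^ 2)) x := by
  have hv : HasDerivAt (fun x => (Real.exp x + a) / b) (Real.exp x / b) x :=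
    ((Real.hasDerivAt_exp x).add_const a).div_const b
  have h := ((Real.hasDerivAt_arctan ((Real.exp x + a) / b)).comp x hv).const_mul (2 / b)
  refine h.congr_deriv ?_
  have h1 : (Real.exp x + a) ^ 2 + b ^ 2 > 0 := by positivity
  field_simp
  ring

lemma key (a b : ℝ) (hb : 0 < b) :
    ∫ x : ℝ, 2 * Real.exp x / ((Real.exp x + a) ^ 2 + b ^ 2)
      = (2 / b) * (Real.pi / 2 - Real.arctan (a / b)) := by
  set f' : ℝ → ℝ := fun x => 2 * Real.exp x / ((Real.exp x + a) ^ 2 + b ^ 2) with hf'def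
  have hpos : ∀ x : ℝ, (0:ℝ) < (Real.exp x + a) ^ 2 + b ^ 2 := fun x => by positivity
  have hderiv : ∀ x, HasDerivAt (fun x => (2 / b) * Real.arctan ((Real.exp x + a) / b)) (f' x) x :=
    fun x => f'_eq a b hb x
  have hcont : Continuous f' := by
    apply Continuous.div (by continuity) (by continuity)
    intro x; exact (hpos x).ne'
  have hint : Integrable f' := by
    rw [← integrableOn_univ, ← Set.Iic_union_Ioi (a := (0:ℝ)),
      integrableOn_union]
    constructor
    · apply Integrable.mono' ((integrableOn_exp_Iic 0).const_mul (2 / b ^ 2))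
        hcont.aestronglyMeasurable.restrict
      filter_upwards with x
      rw [Real.norm_eq_abs, abs_of_nonneg (by positivity : (0:ℝ) ≤ f' x)]
      rw [hf'def]
      have h1 : b ^ 2 ≤ (Real.exp x + a) ^ 2 + b ^ 2 := by nlinarith [sq_nonneg (Real.exp x + a)]
      rw [div_le_iff₀ (hpos x)]
      have := Real.exp_pos x
      calc 2 * Real.exp x = 2 / b ^ 2 * Real.exp x * b ^ 2 := by field_simp
        _ ≤ 2 / b ^ 2 * Real.exp x * ((Real.exp x + a) ^ 2 + b ^ 2) := by
            apply mul_le_mul_of_nonneg_left h1; positivity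
    · exact integrableOn_Ioi_deriv_of_nonneg' (fun x _ => hderiv x)
        (fun x _ => by positivity)
        (by
          have h1 : Tendsto (fun x : ℝ => (Real.exp x + a) / b) atTop atTop :=
            (tendsto_exp_atTop.atTop_add tendsto_const_nhds).atTop_div_const hb
          exact ((Real.tendsto_arctan_atTop.mono_right nhdsWithin_le_nhds).comp h1).const_mul _)
  have hbot : Tendsto (fun x => (2 / b) * Real.arctan ((Real.exp x + a) / b)) atBot
      (𝓝 ((2 / b) * Real.arctan (a / b))) := by
    have h1 : Tendsto (fun x : ℝ => (Real.exp x + a) / b) atBot (𝓝 (a / b)) := by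
      have := Real.tendsto_exp_atBot
      have h2 : Tendsto (fun x : ℝ => Real.exp x + a) atBot (𝓝 (0 + a)) :=
        this.add_const a
      simpa using h2.div_const b
    exact ((Real.continuous_arctan.tendsto _).comp h1).const_mul _
  have htop : Tendsto (fun x => (2 / b) * Real.arctan ((Real.exp x + a) / b)) atTop
      (𝓝 ((2 / b) * (Real.pi / 2))) := by
    have h1 : Tendsto (fun x : ℝ => (Real.exp x + a) / b) atTop atTop :=
      (tendsto_exp_atTop.atTop_add tendsto_const_nhds).atTop_div_const hb
    exact ((Real.tendsto_arctan_atTop.mono_right nhdsWithin_le_nhds).comp h1).const_mul _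
  have := integral_of_hasDerivAt_of_tendsto hderiv hint hbot htop
  rw [this]; ring

open MeasureTheory in
/-- For `u(x,y) = log (2eˣ/(1+t²+2teˣ cos y+e^{2x}))` with `t ≥ 0`, the
supremum over `y` of `∫ e^{u(x,y)} dx` equals `π + 2 arctan t`. -/
theorem sup_line_integral_eq (t : ℝ) (ht : 0 ≤ t) :
    (⨆ y : ℝ, ∫ x : ℝ, Real.exp (Real.log
        (2 * Real.exp x /
          (1 + t ^ 2 + 2 * t * Real.exp x * Real.cos y + Real.exp (2 * x)))))
      = Real.pi + 2 * Real.arctan t := by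
  set b : ℝ → ℝ := fun y => Real.sqrt (1 + t ^ 2 * Real.sin y ^ 2) with hbdef
  have hb1 : ∀ y, 1 ≤ b y := by
    intro y
    nlinarith [Real.sq_sqrt (show (0:ℝ) ≤ 1 + t ^ 2 * Real.sin y ^ 2 by positivity),
      Real.sqrt_nonneg (1 + t ^ 2 * Real.sin y ^ 2), sq_nonneg (t * Real.sin y)]
  have hbpos : ∀ y, 0 < b y := fun y => lt_of_lt_of_le one_pos (hb1 y)
  have hbsq : ∀ y, b y ^ 2 = 1 + t ^ 2 * Real.sin y ^ 2 := fun y =>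
    Real.sq_sqrt (by positivity)
  set g : ℝ → ℝ := fun y => (2 / b y) * (Real.pi / 2 - Real.arctan (t * Real.cos y / b y))
    with hgdef
  have hrw : ∀ y : ℝ, (∫ x : ℝ, Real.exp (Real.log
      (2 * Real.exp x /
        (1 + t ^ 2 + 2 * t * Real.exp x * Real.cos y + Real.exp (2 * x))))) = g y := by
    intro y
    have hD : ∀ x : ℝ, 1 + t ^ 2 + 2 * t * Real.exp x * Real.cos y + Real.exp (2 * x)
        = (Real.exp x + t * Real.cos y) ^ 2 + b y ^ 2 := by
      intro x
      rw [hbsq y]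
      have h2 : Real.exp (2 * x) = Real.exp x ^ 2 := by
        rw [← Real.exp_nat_mul]; norm_num [mul_comm]
      have hs : Real.sin y ^ 2 = 1 - Real.cos y ^ 2 := by
        nlinarith [Real.sin_sq_add_cos_sq y]
      rw [h2, hs]; ring
    have : ∀ x : ℝ, Real.exp (Real.log
        (2 * Real.exp x /
          (1 + t ^ 2 + 2 * t * Real.exp x * Real.cos y + Real.exp (2 * x))))
        = 2 * Real.exp x / ((Real.exp x + t * Real.cos y) ^ 2 + b y ^ 2) := by
      intro x
      rw [hD x, Real.exp_log]
      have := hbpos y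
      positivity
    rw [show (fun x : ℝ => Real.exp (Real.log
        (2 * Real.exp x /
          (1 + t ^ 2 + 2 * t * Real.exp x * Real.cos y + Real.exp (2 * x)))))
        = fun x : ℝ => 2 * Real.exp x / ((Real.exp x + t * Real.cos y) ^ 2 + b y ^ 2)
      from funext this]
    exact key (t * Real.cos y) (b y) (hbpos y)
  have bound : ∀ y : ℝ, g y ≤ Real.pi + 2 * Real.arctan t := by
    intro y
    have hB := hb1 y
    have hBpos := hbpos y
    have h1 : -t ≤ t * Real.cos y / b y := by
      rw [le_div_iff₀ hBpos]
      nlinarith [Real.neg_one_le_cos y]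
    have h2 : Real.arctan (-t) ≤ Real.arctan (t * Real.cos y / b y) :=
      Real.arctan_strictMono.monotone h1
    rw [Real.arctan_neg] at h2
    have h3 : Real.arctan (t * Real.cos y / b y) < Real.pi / 2 :=
      Real.arctan_lt_pi_div_two _
    have h4 : 2 / b y ≤ 2 := by
      rw [div_le_iff₀ hBpos]; nlinarith
    have h5 : 0 ≤ Real.pi / 2 - Real.arctan (t * Real.cos y / b y) := by linarith
    calc g y ≤ 2 * (Real.pi / 2 - Real.arctan (t * Real.cos y / b y)) :=
          mul_le_mul_of_nonneg_right h4 h5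
      _ ≤ Real.pi + 2 * Real.arctan t := by nlinarith
  have heq : g Real.pi = Real.pi + 2 * Real.arctan t := by
    have hbpi : b Real.pi = 1 := by
      rw [hbdef]; simp
    rw [hgdef]
    simp only [hbpi, Real.cos_pi]
    rw [show t * (-1) / 1 = -t by ring, Real.arctan_neg]
    ring
  rw [iSup_congr hrw]
  apply le_antisymm
  · exact ciSup_le bound
  · have bdd : BddAbove (Set.range g) :=
      ⟨Real.pi + 2 * Real.arctan t, by rintro z ⟨y, rfl⟩; exact bound y⟩
    calc Real.pi + 2 * Real.arctan t = g Real.pi := heq.symm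
      _ ≤ ⨆ y, g y := le_ciSup bdd Real.pi
end

section
/- No radial solution of -Δu = e^{2u} on ℝ² is concave: if u(x) = v(|x|) solves the Liouville equation on ℝ² with v: [0,∞) → ℝ C², then u is not a concave function. -/
open Set Filter Real Topology

/-- No radial C² solution of `-Δu = e^{2u}` on `ℝ²` is concave. -/
theorem radial_solution_not_concave (u : ℝ × ℝ → ℝ) (v : ℝ → ℝ)
    (hv : ContDiffOn ℝ 2 v (Set.Ici 0))
    (hrad : ∀ p : ℝ × ℝ, u p = v (Real.sqrt (p.1 ^ 2 + p.2 ^ 2)))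
    (heq : ∀ p : ℝ × ℝ,
      -(deriv (deriv (fun s : ℝ => u (s, p.2))) p.1
          + deriv (deriv (fun s : ℝ => u (p.1, s))) p.2)
        = Real.exp (2 * u p)) :
    ¬ ConcaveOn ℝ Set.univ u := by
  intro hcu
  -- neighborhood basics
  have hIoi : ∀ {x : ℝ}, 0 < x → Set.Ioi (0:ℝ) ∈ 𝓝 x := fun hx => isOpen_Ioi.mem_nhds hx
  -- differentiability of v and deriv v on (0,∞)
  have hvI : ContDiffOn ℝ (1 + 1) v (Set.Ioi 0) := by
    rw [one_add_one_eq_two]; exact hv.mono Set.Ioi_subset_Ici_self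
  obtain ⟨hdv, -, hdv2⟩ := (contDiffOn_succ_iff_deriv_of_isOpen isOpen_Ioi).mp hvI
  have hderiv1 : ∀ x : ℝ, 0 < x → HasDerivAt v (deriv v x) x := fun x hx =>
    (hdv.differentiableAt (hIoi hx)).hasDerivAt
  have hderiv2 : ∀ x : ℝ, 0 < x → HasDerivAt (deriv v) (deriv (deriv v) x) x := fun x hx =>
    (((hdv2.differentiableOn one_ne_zero).differentiableAt (hIoi hx))).hasDerivAt
  -- u on horizontal axis
  have hax : ∀ s : ℝ, 0 ≤ s → u (s, 0) = v s := by
    intro s hs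
    rw [hrad (s, 0)]
    norm_num [Real.sqrt_sq hs]
  -- the radial ODE
  have ode : ∀ x : ℝ, 0 < x →
      deriv (deriv v) x + deriv v x / x = -Real.exp (2 * v x) := by
    intro x hx
    have h1 : deriv (deriv (fun s : ℝ => u (s, 0))) x = deriv (deriv v) x := by
      have hd : ∀ s ∈ Set.Ioi (0:ℝ), deriv (fun s : ℝ => u (s, 0)) s = deriv v s := by
        intro s hs
        exact Filter.EventuallyEq.deriv_eq
          (Filter.eventuallyEq_of_mem (hIoi hs) (fun y hy => hax y (le_of_lt hy)))
      exact Filter.EventuallyEq.deriv_eq (Filter.eventuallyEq_of_mem (hIoi hx) hd)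
    -- vertical direction
    set r : ℝ → ℝ := fun s => Real.sqrt (x ^ 2 + s ^ 2) with hr_def
    have hrpos : ∀ s : ℝ, (0:ℝ) < x ^ 2 + s ^ 2 := fun s => by positivity
    have hrx : ∀ s : ℝ, x ≤ r s := by
      intro s
      have : x = Real.sqrt (x ^ 2) := (Real.sqrt_sq hx.le).symm
      rw [this]
      exact Real.sqrt_le_sqrt (by nlinarith [sq_nonneg s])
    have hrpos' : ∀ s : ℝ, 0 < r s := fun s => lt_of_lt_of_le hx (hrx s)
    have hr0 : r 0 = x := by simp [hr_def, Real.sqrt_sq hx.le]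
    have hrd : ∀ s : ℝ, HasDerivAt r (s / r s) s := by
      intro s
      have hin : HasDerivAt (fun s : ℝ => x ^ 2 + s ^ 2) (2 * s) s := by
        simpa using ((hasDerivAt_pow 2 s).const_add (x ^ 2))
      have := hin.sqrt (ne_of_gt (hrpos s))
      convert this using 1
      rw [mul_div_mul_left s _ (two_ne_zero)]
    have hgv : (fun s : ℝ => u (x, s)) = fun s => v (r s) := by
      funext s; rw [hrad (x, s)]
    have hg' : ∀ s : ℝ, HasDerivAt (fun s : ℝ => u (x, s)) (deriv v (r s) * (s / r s)) s := by
      intro s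
      rw [hgv]
      exact (hderiv1 (r s) (hrpos' s)).comp s (hrd s)
    have hDg : deriv (fun s : ℝ => u (x, s)) = fun s => deriv v (r s) * (s / r s) :=
      funext fun s => (hg' s).deriv
    have hA : HasDerivAt (fun s : ℝ => deriv v (r s))
        (deriv (deriv v) (r 0) * (0 / r 0)) 0 :=
      (hderiv2 (r 0) (hrpos' 0)).comp 0 (hrd 0)
    have hB : HasDerivAt (fun s : ℝ => s / r s)
        (1 * (r 0)⁻¹ + 0 * (-(0 / r 0) / (r 0) ^ 2)) 0 := by
      have hinv : HasDerivAt (fun s : ℝ => (r s)⁻¹) (-(0 / r 0) / (r 0) ^ 2) 0 :=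
        (hrd 0).inv (ne_of_gt (hrpos' 0))
      simpa [div_eq_mul_inv] using (hasDerivAt_id 0).fun_mul hinv
    have h2' : HasDerivAt (fun s : ℝ => deriv v (r s) * (s / r s)) (deriv v x / x) 0 := by
      have := hA.fun_mul hB
      refine this.congr_deriv ?_
      rw [hr0]
      field_simp
      ring
    have h2 : deriv (deriv (fun s : ℝ => u (x, s))) 0 = deriv v x / x := by
      rw [hDg]; exact h2'.deriv
    have hE := heq (x, 0)
    simp only at hE
    rw [h1, h2, hax x hx.le] at hE
    linarith [hE]
  -- concavity of v on [0,∞)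
  have hvconc : ConcaveOn ℝ (Set.Ici 0) v := by
    refine ⟨convex_Ici 0, ?_⟩
    intro p hp q hq a b ha hb hab
    have h := hcu.2 (Set.mem_univ ((p, 0) : ℝ × ℝ)) (Set.mem_univ ((q, 0) : ℝ × ℝ)) ha hb hab
    have hpt : a • ((p, 0) : ℝ × ℝ) + b • ((q, 0) : ℝ × ℝ) = ((a * p + b * q, 0) : ℝ × ℝ) := by
      simp [Prod.ext_iff]
    rw [hpt, hax p hp, hax q hq, hax (a * p + b * q) (add_nonneg (mul_nonneg ha (Set.mem_Ici.mp hp)) (mul_nonneg hb (Set.mem_Ici.mp hq)))] at h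
    simpa using h
  have hvconcI : ConcaveOn ℝ (Set.Ioi 0) v := hvconc.subset Set.Ioi_subset_Ici_self (convex_Ioi 0)
  -- v is maximized at 0
  have hmax : ∀ y : ℝ, 0 ≤ y → v y ≤ v 0 := by
    intro y hy
    have h := hcu.2 (Set.mem_univ ((y, 0) : ℝ × ℝ)) (Set.mem_univ ((-y, 0) : ℝ × ℝ))
      (by norm_num : (0:ℝ) ≤ 1/2) (by norm_num : (0:ℝ) ≤ 1/2) (by norm_num)
    have hpt : (1/2 : ℝ) • ((y, 0) : ℝ × ℝ) + (1/2 : ℝ) • ((-y, 0) : ℝ × ℝ)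
        = ((0, 0) : ℝ × ℝ) := by
      norm_num [Prod.ext_iff]
    have hneg : u (-y, 0) = v y := by
      rw [hrad (-y, 0)]; norm_num [Real.sqrt_sq hy]
    rw [hpt, hax 0 le_rfl, hax y hy, hneg] at h
    simp only [smul_eq_mul] at h
    linarith
  -- deriv v ≤ 0 on (0,∞)
  have hnonpos : ∀ x : ℝ, 0 < x → deriv v x ≤ 0 := by
    intro x hx
    have h := hvconc.deriv_le_slope (Set.self_mem_Ici) (Set.mem_Ici.mpr hx.le) hx
      (hderiv1 x hx).differentiableAt
    rw [slope_def_field] at h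
    have hle : (v x - v 0) / (x - 0) ≤ 0 :=
      div_nonpos_of_nonpos_of_nonneg (by linarith [hmax x hx.le]) (by linarith)
    linarith
  -- deriv v is antitone on (0,∞)
  have hanti : AntitoneOn (deriv v) (Set.Ioi 0) :=
    hvconcI.antitoneOn_deriv (fun x hx => (hderiv1 x hx).differentiableAt)
  -- second derivative nonpositive
  have hdd_nonpos : ∀ x : ℝ, 0 < x → deriv (deriv v) x ≤ 0 := by
    intro x hx
    have hD := hderiv2 x hx
    rw [hasDerivAt_iff_tendsto_slope] at hD
    refine le_of_tendsto hD ?_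
    have hmem : Set.Ioi (0:ℝ) ∈ 𝓝[≠] x := nhdsWithin_le_nhds (hIoi hx)
    filter_upwards [hmem, self_mem_nhdsWithin] with y hy hyx
    have hyx' : y ≠ x := hyx
    rw [slope_def_field]
    rcases lt_or_gt_of_ne hyx' with h | h
    · exact div_nonpos_of_nonneg_of_nonpos
        (by linarith [hanti hy (Set.mem_Ioi.mpr hx) h.le]) (by linarith)
    · exact div_nonpos_of_nonpos_of_nonneg
        (by linarith [hanti (Set.mem_Ioi.mpr hx) hy h.le]) (by linarith)
  -- deriv v 2 < 0
  have hc : deriv v 2 < 0 := by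
    by_contra hcn
    push_neg at hcn
    have h2z : deriv v 2 = 0 := le_antisymm (hnonpos 2 (by norm_num)) hcn
    have hzero : ∀ y ∈ Set.Ioo (0:ℝ) 2, deriv v y = 0 := by
      intro y hy
      have h1 := hanti (Set.mem_Ioi.mpr hy.1) (Set.mem_Ioi.mpr (lt_trans hy.1 hy.2)) hy.2.le
      have h2 := hnonpos y hy.1
      rw [h2z] at h1
      linarith
    have hone : deriv (deriv v) 1 = 0 := by
      have hev : deriv v =ᶠ[𝓝 1] (fun _ => (0:ℝ)) := by
        refine Filter.eventuallyEq_of_mem (isOpen_Ioo.mem_nhds ?_) hzero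
        norm_num
      rw [hev.deriv_eq]
      simp
    have hthis := ode 1 (by norm_num)
    have h1z : deriv v 1 = 0 := hzero 1 (by norm_num)
    rw [hone, h1z] at hthis
    norm_num at hthis
  set c : ℝ := -deriv v 2 with hc_def
  have hcpos : 0 < c := by simp [hc_def]; linarith
  -- tangent line bound : v x ≤ v 2 - c * (x - 2) for x > 2
  have htang : ∀ x : ℝ, 2 < x → v x ≤ v 2 - c * (x - 2) := by
    intro x hx
    have h := hvconc.slope_le_deriv (Set.mem_Ici.mpr (by norm_num : (0:ℝ) ≤ 2))
      (Set.mem_Ici.mpr (by linarith : (0:ℝ) ≤ x)) hx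
      (hderiv1 2 (by norm_num)).differentiableAt
    rw [slope_def_field] at h
    have hx2 : 0 < x - 2 := by linarith
    have := (div_le_iff₀ hx2).mp h
    simp only [hc_def]
    nlinarith
  -- deriv v x ≤ -c for x ≥ 2
  have hderle : ∀ x : ℝ, 2 ≤ x → deriv v x ≤ -c := by
    intro x hx
    have := hanti (Set.mem_Ioi.mpr (by norm_num : (0:ℝ) < 2))
      (Set.mem_Ioi.mpr (by linarith : (0:ℝ) < x)) hx
    simpa [hc_def] using this
  -- find x > 2 with exp (2 * v x) < c / x
  have hK : (0:ℝ) < Real.exp (2 * v 2 + 4 * c) := Real.exp_pos _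
  set K : ℝ := Real.exp (2 * v 2 + 4 * c) with hK_def
  have htend : Filter.Tendsto (fun x : ℝ => x * Real.exp (-(2 * c * x))) Filter.atTop (𝓝 0) := by
    have h0 : Filter.Tendsto (fun t : ℝ => t ^ 1 * Real.exp (-t)) Filter.atTop (𝓝 0) :=
      Real.tendsto_pow_mul_exp_neg_atTop_nhds_zero 1
    have h1 : Filter.Tendsto (fun x : ℝ => 2 * c * x) Filter.atTop Filter.atTop := by
      apply Filter.Tendsto.const_mul_atTop (by positivity : (0:ℝ) < 2 * c)
      exact Filter.tendsto_id
    have h2 := h0.comp h1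
    have h3 : Filter.Tendsto (fun x : ℝ => (1 / (2 * c)) * ((2 * c * x) ^ 1 * Real.exp (-(2 * c * x))))
        Filter.atTop (𝓝 ((1 / (2 * c)) * 0)) := h2.const_mul _
    rw [mul_zero] at h3
    refine h3.congr (fun x => ?_)
    have h2c : (2 * c) ≠ 0 := by positivity
    field_simp
  have hev : ∀ᶠ x : ℝ in Filter.atTop, x * Real.exp (-(2 * c * x)) < c / K :=
    htend.eventually (gt_mem_nhds (by positivity))
  obtain ⟨x, hx1, hx2⟩ := (hev.and (Filter.eventually_gt_atTop 2)).exists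
  have hxpos : (0:ℝ) < x := by linarith
  -- exp (2 * v x) < c / x
  have hexp : Real.exp (2 * v x) < c / x := by
    have hb : Real.exp (2 * v x) ≤ K * Real.exp (-(2 * c * x)) := by
      have := htang x hx2
      calc Real.exp (2 * v x) ≤ Real.exp (2 * (v 2 - c * (x - 2))) := by
            apply Real.exp_le_exp.mpr; linarith
        _ = K * Real.exp (-(2 * c * x)) := by
            rw [hK_def, ← Real.exp_add]; ring_nf
    have hlt : K * Real.exp (-(2 * c * x)) < c / x := by
      rw [lt_div_iff₀ hxpos]
      calc K * Real.exp (-(2 * c * x)) * x = K * (x * Real.exp (-(2 * c * x))) := by ring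
        _ < K * (c / K) := by
            apply mul_lt_mul_of_pos_left hx1 hK
        _ = c := by field_simp
    linarith
  -- final contradiction via the ODE
  have hode := ode x hxpos
  have hder := hderle x hx2.le
  have hdd := hdd_nonpos x hxpos
  have h1 : deriv v x / x ≤ -c / x :=
    (div_le_div_iff_of_pos_right hxpos).mpr hder
  have h2 : -Real.exp (2 * v x) > -(c / x) := by linarith
  rw [neg_div] at h1
  nlinarith [hode, h1, h2]
end
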